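/- Let (X, λ) be a finite measure space and f : X × ℝ → [0,1] a kinetic function with Young measure ν. If f(z, ·)(1 − f(z, ·)) = 0 for a.e. (z, ξ), then there exists a measurable u : X → ℝ with f(z, ξ) = 𝟙_{u(z)>ξ} for a.e. (z, ξ); moreover u(z) = ∫_ℝ (f(z,ξ) − 𝟙_{0>ξ}) dξ for a.e. z. -/

import Mathlib

open MeasureTheory Set

lemma integral_ite_sub_ite (a : ℝ) :
    ∫ ξ : ℝ, ((if a > ξ then (1:ℝ) else 0) - if (0:ℝ) > ξ then (1:ℝ) else 0) = a := by
  rcases le_total 0 a with h0 | h0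
  · have heq : (fun ξ : ℝ => (if a > ξ then (1:ℝ) else 0) - if (0:ℝ) > ξ then (1:ℝ) else 0)
        = (Ico (0:ℝ) a).indicator (fun _ => (1:ℝ)) := by
      funext ξ
      simp only [indicator, mem_Ico, gt_iff_lt]
      split_ifs <;> simp_all <;> linarith
    rw [heq, integral_indicator_const _ measurableSet_Ico, measureReal_def, Real.volume_Ico, smul_eq_mul,
      mul_one, ENNReal.toReal_ofReal (by linarith)]
    ring
  · have heq : (fun ξ : ℝ => (if a > ξ then (1:ℝ) else 0) - if (0:ℝ) > ξ then (1:ℝ) else 0)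
        = fun ξ => -((Ico a (0:ℝ)).indicator (fun _ => (1:ℝ)) ξ) := by
      funext ξ
      simp only [indicator, mem_Ico, gt_iff_lt]
      split_ifs <;> simp_all <;> linarith
    rw [heq, integral_neg, integral_indicator_const _ measurableSet_Ico, measureReal_def, Real.volume_Ico,
      smul_eq_mul, mul_one, ENNReal.toReal_ofReal (by linarith)]
    ring

lemma exists_threshold (μ : Measure ℝ) [IsProbabilityMeasure μ]
    (h : ∀ᵐ ξ : ℝ, (μ (Ioi ξ)).toReal = 0 ∨ (μ (Ioi ξ)).toReal = 1) :
    ∃ a : ℝ, ∀ᵐ ξ : ℝ, (μ (Ioi ξ)).toReal = if a > ξ then (1:ℝ) else 0 := by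
  set F : ℝ → ℝ := fun ξ => (μ (Ioi ξ)).toReal with hF
  have hanti : Antitone F := fun x y hxy =>
    ENNReal.toReal_mono (measure_ne_top _ _) (measure_mono (Ioi_subset_Ioi hxy))
  set S : Set ℝ := {ξ | (1:ℝ)/2 ≤ F ξ} with hS
  -- S is nonempty
  have hne : S.Nonempty := by
    have hmono : Monotone fun n : ℕ => Ioi (-(n:ℝ)) := fun n m hnm =>
      Ioi_subset_Ioi (by exact_mod_cast neg_le_neg (by exact_mod_cast hnm))
    have hun : (⋃ n : ℕ, Ioi (-(n:ℝ))) = univ := by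
      ext x
      simp only [mem_iUnion, mem_Ioi, mem_univ, iff_true]
      obtain ⟨n, hn⟩ := exists_nat_gt (-x)
      exact ⟨n, by linarith⟩
    have htend := tendsto_measure_iUnion_atTop (μ := μ) hmono
    rw [hun, measure_univ] at htend
    have : ∀ᶠ n : ℕ in Filter.atTop, μ (Ioi (-(n:ℝ))) > 1/2 :=
      htend.eventually (eventually_gt_nhds (by norm_num))
    obtain ⟨n, hn⟩ := this.exists
    refine ⟨-(n:ℝ), ?_⟩
    have := ENNReal.toReal_mono (measure_ne_top _ _) hn.le
    simpa [S, F] using le_trans (by norm_num) this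
  -- S is bounded above
  have hbdd : BddAbove S := by
    have hanti2 : Antitone fun n : ℕ => Ioi ((n:ℝ)) := fun n m hnm =>
      Ioi_subset_Ioi (by exact_mod_cast hnm)
    have hint : (⋂ n : ℕ, Ioi ((n:ℝ))) = ∅ := by
      ext x
      simp only [mem_iInter, mem_Ioi, mem_empty_iff_false, iff_false, not_forall, not_lt]
      obtain ⟨n, hn⟩ := exists_nat_gt x
      exact ⟨n, hn.le⟩
    have htend := tendsto_measure_iInter_atTop (μ := μ)
      (fun n => measurableSet_Ioi.nullMeasurableSet) hanti2 ⟨0, measure_ne_top _ _⟩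
    rw [hint, measure_empty] at htend
    have : ∀ᶠ n : ℕ in Filter.atTop, μ (Ioi ((n:ℝ))) < 1/2 :=
      htend.eventually (eventually_lt_nhds (by norm_num))
    obtain ⟨n, hn⟩ := this.exists
    refine ⟨(n:ℝ), fun ξ hξ => ?_⟩
    by_contra hlt
    push_neg at hlt
    have h1 : F ξ ≤ F n := hanti hlt.le
    have h2 : F (n:ℝ) < 1/2 := by
      have := ENNReal.toReal_lt_toReal (measure_ne_top _ _) (by norm_num : (1/2 : ENNReal) ≠ ⊤) |>.2 hn
      simpa [F] using this
    exact absurd hξ (by simp only [hS, mem_setOf_eq]; linarith)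
  set a := sSup S with ha
  refine ⟨a, ?_⟩
  have hane : ∀ᵐ ξ : ℝ, ξ ≠ a := by
    rw [ae_iff]
    simpa using measure_singleton a
  filter_upwards [h, hane] with ξ hξ hξa
  rcases lt_trichotomy ξ a with hlt | heq | hgt
  · obtain ⟨ξ', hξ'S, hξξ'⟩ := exists_lt_of_lt_csSup hne hlt
    have : (1:ℝ)/2 ≤ F ξ := le_trans hξ'S (hanti hξξ'.le)
    rw [if_pos hlt]
    rcases hξ with h0 | h1
    · exfalso
      have h0' : F ξ = 0 := h0
      linarith
    · exact h1
  · exact absurd heq hξa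
  · have hnot : ξ ∉ S := fun hmem => absurd (le_csSup hbdd hmem) (not_le.mpr hgt)
    simp only [hS, mem_setOf_eq, not_le] at hnot
    rw [if_neg (not_lt.mpr hgt.le)]
    rcases hξ with h0 | h1
    · exact h0
    · exfalso
      have h1' : F ξ = 1 := h1
      linarith

theorem kinetic_function_is_indicator {X : Type*} [MeasurableSpace X]
    (lam : Measure X) [IsFiniteMeasure lam]
    (ν : X → Measure ℝ) (hprob : ∀ z, IsProbabilityMeasure (ν z))
    (hmeasν : Measurable ν)
    (hvanish : ∀ p : ℝ, 1 ≤ p →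
      (∫⁻ z, ∫⁻ ξ, ENNReal.ofReal (|ξ| ^ p) ∂(ν z) ∂lam) < ⊤)
    (f : X → ℝ → ℝ) (hf : ∀ z ξ, f z ξ = ((ν z) (Ioi ξ)).toReal)
    (hchi : ∀ᵐ q ∂(lam.prod (volume : Measure ℝ)), f q.1 q.2 * (1 - f q.1 q.2) = 0) :
    ∃ u : X → ℝ, Measurable u ∧
      (∀ᵐ q ∂(lam.prod (volume : Measure ℝ)),
        f q.1 q.2 = if u q.1 > q.2 then (1:ℝ) else 0) ∧
      (∀ᵐ z ∂lam, u z = ∫ ξ : ℝ, (f z ξ - if (0:ℝ) > ξ then (1:ℝ) else 0)) := by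
  -- joint measurability
  set κ' : ProbabilityTheory.Kernel (X × ℝ) ℝ := ⟨fun p => ν p.1, hmeasν.comp measurable_fst⟩
    with hκ'
  haveI : ProbabilityTheory.IsMarkovKernel κ' := ⟨fun p => hprob p.1⟩
  have ht : MeasurableSet {q : (X × ℝ) × ℝ | q.1.2 < q.2} :=
    measurableSet_lt (measurable_fst.snd) measurable_snd
  have hjm : Measurable fun p : X × ℝ => (ν p.1) (Ioi p.2) := by
    have h := ProbabilityTheory.Kernel.measurable_kernel_prodMk_left (κ := κ') ht
    exact h
  have hjmf : Measurable fun p : X × ℝ => f p.1 p.2 := by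
    simp only [hf]
    exact hjm.ennreal_toReal
  set u : X → ℝ := fun z => ∫ ξ : ℝ, (f z ξ - if (0:ℝ) > ξ then (1:ℝ) else 0) with hudef
  have hg : Measurable fun p : X × ℝ => f p.1 p.2 - if (0:ℝ) > p.2 then (1:ℝ) else 0 := by
    refine hjmf.sub (Measurable.ite ?_ measurable_const measurable_const)
    exact measurableSet_lt measurable_snd measurable_const
  have hu : Measurable u :=
    (hg.stronglyMeasurable.integral_prod_right').measurable
  refine ⟨u, hu, ?_, ae_of_all _ fun z => rfl⟩
  have key : ∀ᵐ z ∂lam, ∀ᵐ ξ : ℝ, f z ξ = if u z > ξ then (1:ℝ) else 0 := by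
    filter_upwards [Measure.ae_ae_of_ae_prod hchi] with z hz
    have hz' : ∀ᵐ ξ : ℝ, ((ν z) (Ioi ξ)).toReal = 0 ∨ ((ν z) (Ioi ξ)).toReal = 1 := by
      filter_upwards [hz] with ξ hξ
      rw [hf] at hξ
      rcases mul_eq_zero.1 hξ with h0 | h1
      · exact Or.inl h0
      · exact Or.inr (by linarith [sub_eq_zero.1 h1])
    haveI := hprob z
    obtain ⟨a, ha⟩ := exists_threshold (ν z) hz'
    have hfa : ∀ᵐ ξ : ℝ, f z ξ = if a > ξ then (1:ℝ) else 0 := by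
      filter_upwards [ha] with ξ hξ
      rw [hf]; exact hξ
    have hua : u z = a := by
      have hcong : ∫ ξ : ℝ, (f z ξ - if (0:ℝ) > ξ then (1:ℝ) else 0)
          = ∫ ξ : ℝ, ((if a > ξ then (1:ℝ) else 0) - if (0:ℝ) > ξ then (1:ℝ) else 0) := by
        refine integral_congr_ae ?_
        filter_upwards [hfa] with ξ hξ
        rw [hξ]
      rw [hudef]
      simp only
      rw [hcong, integral_ite_sub_ite]
    rw [hua]
    exact hfa
  have hmeasset : MeasurableSet {q : X × ℝ | f q.1 q.2 = if u q.1 > q.2 then (1:ℝ) else 0} := by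
    refine measurableSet_eq_fun hjmf (Measurable.ite ?_ measurable_const measurable_const)
    exact measurableSet_lt measurable_snd (hu.comp measurable_fst)
  exact (Measure.ae_prod_iff_ae_ae hmeasset).2 key
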